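/- arXiv:2201.00865 — 8 statements merged into one kernel-verified Lean document; each statement's English description precedes it below -/
import Mathlib

section
/- There exists a Sarvate-Beam cube of order 2: a 2×2×2 array of nonnegative integers such that the 12 line sums (sums along each of the three axis directions) are exactly the integers 0, 1, ..., 11 in some order. -/
/-- The line sums of an `n × n × n` array `f`: for each direction `d : Fin 3`
and fixed pair of coordinates, the sum over the remaining coordinate. -/
def lineSums (n : ℕ) (f : Fin n → Fin n → Fin n → ℕ) :
    Fin 3 × Fin n × Fin n → ℕ :=
  fun p =>
    if p.1 = 0 then ∑ k, f k p.2.1 p.2.2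
    else if p.1 = 1 then ∑ k, f p.2.1 k p.2.2
    else ∑ k, f p.2.1 p.2.2 k

/-- A Sarvate-Beam cube of order `n`: an `n × n × n` array of nonnegative
integers whose `3n²` line sums are exactly `0, 1, …, 3n² − 1` in some order. -/
def IsSBC (n : ℕ) (f : Fin n → Fin n → Fin n → ℕ) : Prop :=
  Function.Injective (lineSums n f) ∧
  (∀ p, lineSums n f p < 3 * n ^ 2) ∧
  (∀ m < 3 * n ^ 2, ∃ p, lineSums n f p = m)

/-- There exists a Sarvate-Beam cube of order 2: a `2×2×2` array of nonnegative
integers whose 12 line sums are exactly `0, 1, …, 11` in some order. -/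
theorem sbc_two_exists : ∃ f : Fin 2 → Fin 2 → Fin 2 → ℕ, IsSBC 2 f := by
  refine ⟨fun i j k => !![!![0,0;1,2], !![4,6;4,5]] 0 i j k, ?_, ?_, ?_⟩ <;> decide
end

section
/- There exists a Sarvate-Beam cube of order 3: a 3×3×3 array of nonnegative integers whose 27 line sums are exactly the integers 0, 1, ..., 26 in some order. -/
def sbcF : Fin 3 → Fin 3 → Fin 3 → ℕ :=
  ![![![2, 0, 6], ![0, 12, 2], ![4, 9, 5]],
    ![![17, 1, 1], ![4, 8, 0], ![2, 0, 14]],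
    ![![5, 0, 0], ![0, 0, 0], ![5, 17, 3]]]

/-- There exists a Sarvate-Beam cube of order 3: a `3×3×3` array of nonnegative
integers whose 27 line sums are exactly `0, 1, …, 26` in some order. -/
theorem sbc_three_exists : ∃ f : Fin 3 → Fin 3 → Fin 3 → ℕ, IsSBC 3 f := by
  refine ⟨sbcF, ?_, ?_, ?_⟩ <;> decide
end

section
/- For every positive integer m, there exists a (3,2)-GDD of type m^4: a multiset of 3-element blocks on a 4m-point set partitioned into 4 groups of size m, such that same-group pairs have frequency 0 and every cross-group pair has frequency exactly 2. -/
def pairFreq {V : Type*} [DecidableEq V] (B : Multiset (Finset V)) (P : Finset V) : ℕ :=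
  (B.filter (fun b => P ⊆ b)).card

namespace GDD

open Finset

variable {n : ℕ}

def blk (i j k : Fin 4) (p : Fin (n+1) × Fin (n+1)) : Finset (Fin (n+1) × Fin 4) :=
  {(p.1, i), (p.2, j), (-(p.1+p.2), k)}

def comp (n : ℕ) (i j k : Fin 4) : Multiset (Finset (Fin (n+1) × Fin 4)) :=
  (Finset.univ : Finset (Fin (n+1) × Fin (n+1))).val.map (blk i j k)

lemma mem_blk (i j k : Fin 4) (p : Fin (n+1) × Fin (n+1)) (v : Fin (n+1)) (t : Fin 4) :
    (v, t) ∈ blk i j k p ↔ (v = p.1 ∧ t = i) ∨ (v = p.2 ∧ t = j) ∨ (v = -(p.1+p.2) ∧ t = k) := by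
  simp [blk, Prod.ext_iff]

lemma pairFreq_comp (i j k : Fin 4) (P : Finset (Fin (n+1) × Fin 4)) :
    pairFreq (comp n i j k) P
      = (Finset.univ.filter (fun p : Fin (n+1) × Fin (n+1) => P ⊆ blk i j k p)).card := by
  simp [pairFreq, comp, Multiset.filter_map, Finset.card, Finset.filter]

lemma pairFreq_add {V : Type*} [DecidableEq V] (A B : Multiset (Finset V)) (P : Finset V) :
    pairFreq (A + B) P = pairFreq A P + pairFreq B P := by
  simp [pairFreq, Multiset.filter_add]

lemma pair_subset {V : Type*} [DecidableEq V] (x y : V) (b : Finset V) :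
    ({x, y} : Finset V) ⊆ b ↔ x ∈ b ∧ y ∈ b := by
  simp [Finset.insert_subset_iff]

lemma cardone {α : Type*} [Fintype α] [DecidableEq α] {q : α → Prop} [DecidablePred q] (a : α)
    (h : ∀ x, q x ↔ x = a) : (Finset.univ.filter q).card = 1 := by
  have : Finset.univ.filter q = {a} := by ext x; simp [h]
  simp [this]

lemma cardzero {α : Type*} [Fintype α] {q : α → Prop} [DecidablePred q]
    (h : ∀ x, ¬ q x) : (Finset.univ.filter q).card = 0 := by
  simp [Finset.filter_eq_empty_iff.2 fun x _ => h x]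

lemma L12 (a b : Fin (n+1)) :
    (Finset.univ.filter (fun p : Fin (n+1) × Fin (n+1) => a = p.1 ∧ b = p.2)).card = 1 := by
  apply cardone (a, b); rintro ⟨u, v⟩
  simp only [Prod.mk.injEq]; constructor
  · rintro ⟨rfl, rfl⟩; exact ⟨rfl, rfl⟩
  · rintro ⟨rfl, rfl⟩; exact ⟨rfl, rfl⟩

lemma L21 (a b : Fin (n+1)) :
    (Finset.univ.filter (fun p : Fin (n+1) × Fin (n+1) => a = p.2 ∧ b = p.1)).card = 1 := by
  apply cardone (b, a); rintro ⟨u, v⟩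
  simp only [Prod.mk.injEq]; constructor
  · rintro ⟨rfl, rfl⟩; exact ⟨rfl, rfl⟩
  · rintro ⟨rfl, rfl⟩; exact ⟨rfl, rfl⟩

lemma L13 (a b : Fin (n+1)) :
    (Finset.univ.filter (fun p : Fin (n+1) × Fin (n+1) => a = p.1 ∧ b = -p.2 + -p.1)).card = 1 := by
  apply cardone (a, -a-b); rintro ⟨u, v⟩
  simp only [Prod.mk.injEq]; constructor
  · rintro ⟨rfl, h2⟩; exact ⟨rfl, by open Fin.CommRing in linear_combination h2⟩
  · rintro ⟨rfl, rfl⟩; exact ⟨rfl, by open Fin.CommRing in ring⟩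

lemma L31 (a b : Fin (n+1)) :
    (Finset.univ.filter (fun p : Fin (n+1) × Fin (n+1) => a = -p.2 + -p.1 ∧ b = p.1)).card = 1 := by
  apply cardone (b, -b-a); rintro ⟨u, v⟩
  simp only [Prod.mk.injEq]; constructor
  · rintro ⟨h1, rfl⟩; exact ⟨rfl, by open Fin.CommRing in linear_combination h1⟩
  · rintro ⟨rfl, rfl⟩; exact ⟨by open Fin.CommRing in ring, rfl⟩

lemma L23 (a b : Fin (n+1)) :
    (Finset.univ.filter (fun p : Fin (n+1) × Fin (n+1) => a = p.2 ∧ b = -p.2 + -p.1)).card = 1 := by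
  apply cardone (-b-a, a); rintro ⟨u, v⟩
  simp only [Prod.mk.injEq]; constructor
  · rintro ⟨rfl, h2⟩; exact ⟨by open Fin.CommRing in linear_combination h2, rfl⟩
  · rintro ⟨rfl, rfl⟩; exact ⟨rfl, by open Fin.CommRing in ring⟩

lemma L32 (a b : Fin (n+1)) :
    (Finset.univ.filter (fun p : Fin (n+1) × Fin (n+1) => a = -p.2 + -p.1 ∧ b = p.2)).card = 1 := by
  apply cardone (-a-b, b); rintro ⟨u, v⟩
  simp only [Prod.mk.injEq]; constructor
  · rintro ⟨h1, rfl⟩; exact ⟨by open Fin.CommRing in linear_combination h1, rfl⟩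
  · rintro ⟨rfl, rfl⟩; exact ⟨by open Fin.CommRing in ring, rfl⟩

end GDD

namespace GDD

lemma card_blk {i j k : Fin 4} (h1 : i ≠ j) (h2 : i ≠ k) (h3 : j ≠ k)
    (p : Fin (n+1) × Fin (n+1)) : (blk i j k p).card = 3 := by
  rw [blk, Finset.card_insert_of_notMem, Finset.card_insert_of_notMem,
    Finset.card_singleton]
  · simp [Prod.ext_iff, h3]
  · simp [Prod.ext_iff, h1, h2]

def Bfull (n : ℕ) : Multiset (Finset (Fin (n+1) × Fin 4)) :=
  comp n 0 1 2 + comp n 0 1 3 + comp n 0 2 3 + comp n 1 2 3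

lemma Lzero {a b : Fin (n+1)} (hab : a ≠ b) (f : Fin (n+1) × Fin (n+1) → Fin (n+1)) :
    (Finset.univ.filter (fun p => a = f p ∧ b = f p)).card = 0 :=
  cardzero (by rintro p ⟨h1, h2⟩; exact hab (h1.trans h2.symm))

end GDD

open GDD in
/-- For every positive integer `m` there exists a (3,2)-GDD of type `m⁴`:
a multiset of 3-element blocks on `Fin m × Fin 4` (groups `Fin m × {i}`) such
that same-group pairs have frequency 0 and every cross-group pair has
frequency exactly 2. -/
theorem gdd_lambda_two_type_m_four_exists (m : ℕ) (hm : 1 ≤ m) :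
    ∃ B : Multiset (Finset (Fin m × Fin 4)),
      (∀ b ∈ B, b.card = 3) ∧
      (∀ x y : Fin m × Fin 4, x ≠ y → x.2 = y.2 →
        pairFreq B {x, y} = 0) ∧
      (∀ x y : Fin m × Fin 4, x.2 ≠ y.2 → pairFreq B {x, y} = 2) := by
  obtain ⟨n, rfl⟩ : ∃ n, m = n + 1 := ⟨m - 1, by omega⟩
  refine ⟨Bfull n, ?_, ?_, ?_⟩
  · intro b hb
    simp only [Bfull, Multiset.mem_add, comp, Multiset.mem_map] at hb
    rcases hb with (((⟨p, _, rfl⟩ | ⟨p, _, rfl⟩) | ⟨p, _, rfl⟩) | ⟨p, _, rfl⟩) <;>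
      exact card_blk (by decide) (by decide) (by decide) p
  · rintro ⟨a, s⟩ ⟨b, t⟩ hxy hst
    simp only at hst
    subst hst
    have hab : a ≠ b := fun h => hxy (by rw [h])
    fin_cases s <;>
      · simp only [Bfull, pairFreq_add, pairFreq_comp, pair_subset, mem_blk]
        simp [Lzero hab]
  · rintro ⟨a, s⟩ ⟨b, t⟩ hst
    simp only at hst
    fin_cases s <;> fin_cases t <;>
      first
        | exact absurd rfl hst
        | (simp only [Bfull, pairFreq_add, pairFreq_comp, pair_subset, mem_blk]
           simp [L12, L21, L13, L31, L23, L32])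
end

section
/- There is no SBTS_0(4): no multiset of 3-element subsets of a 4-element set has pair frequencies forming a bijection onto {0,1,2,3,4,5}. -/
/-- There is no SBTS₀(4): no multiset of 3-element subsets of a 4-element set
has pair frequencies forming a bijection onto `{0,1,2,3,4,5}`. -/
theorem no_sbts_zero_four :
    ¬∃ B : Multiset (Finset (Fin 4)),
      (∀ b ∈ B, b.card = 3) ∧
      (∀ P : Finset (Fin 4), P.card = 2 → pairFreq B P < 6) ∧
      (∀ P Q : Finset (Fin 4), P.card = 2 → Q.card = 2 →
        pairFreq B P = pairFreq B Q → P = Q) ∧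
      (∀ n < 6, ∃ P : Finset (Fin 4), P.card = 2 ∧ pairFreq B P = n) := by
  rintro ⟨B, hcard, -, hinj, hsurj⟩
  obtain ⟨P, hP2, hP0⟩ := hsurj 0 (by norm_num)
  obtain ⟨a, b, hab, rfl⟩ := Finset.card_eq_two.mp hP2
  have hcompl : (({a, b} : Finset (Fin 4))ᶜ).card = 2 := by
    rw [Finset.card_compl, hP2]; rfl
  obtain ⟨c, d, hcd, hC⟩ := Finset.card_eq_two.mp hcompl
  have hc : c ∉ ({a, b} : Finset (Fin 4)) := by
    have : c ∈ (({a, b} : Finset (Fin 4))ᶜ) := by rw [hC]; simp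
    simpa using this
  have hd : d ∉ ({a, b} : Finset (Fin 4)) := by
    have : d ∈ (({a, b} : Finset (Fin 4))ᶜ) := by rw [hC]; simp
    simpa using this
  simp only [Finset.mem_insert, Finset.mem_singleton, not_or] at hc hd
  obtain ⟨hca, hcb⟩ := hc
  obtain ⟨hda, hdb⟩ := hd
  -- no block contains both a and b
  have hno : ∀ t ∈ B, ¬ ({a, b} : Finset (Fin 4)) ⊆ t := by
    have h0 : Multiset.filter (fun t => ({a, b} : Finset (Fin 4)) ⊆ t) B = 0 := by
      have := hP0
      unfold pairFreq at this
      exact Multiset.card_eq_zero.mp this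
    intro t ht hsub
    have := Multiset.mem_filter.mpr ⟨ht, hsub⟩
    rw [h0] at this
    exact absurd this (Multiset.notMem_zero t)
  -- a block containing a must equal {b}ᶜ
  have key : ∀ t ∈ B, (({a, c} : Finset (Fin 4)) ⊆ t ↔ ({a, d} : Finset (Fin 4)) ⊆ t) := by
    intro t ht
    by_cases hat : a ∈ t
    · have hbt : b ∉ t := by
        intro hbt
        exact hno t ht (Finset.insert_subset hat (Finset.singleton_subset_iff.mpr hbt))
      have hsub : t ⊆ ({b} : Finset (Fin 4))ᶜ := by
        intro x hx
        simp only [Finset.mem_compl, Finset.mem_singleton]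
        rintro rfl; exact hbt hx
      have hteq : t = ({b} : Finset (Fin 4))ᶜ := by
        apply Finset.eq_of_subset_of_card_le hsub
        rw [Finset.card_compl, Finset.card_singleton, hcard t ht]; rfl
      have hct : c ∈ t := by rw [hteq]; simpa using hcb
      have hdt : d ∈ t := by rw [hteq]; simpa using hdb
      constructor <;> intro _ <;>
        exact Finset.insert_subset hat (Finset.singleton_subset_iff.mpr (by assumption))
    · constructor <;> intro h <;>
        exact absurd (h (Finset.mem_insert_self a _)) hat
  have hfreq : pairFreq B {a, c} = pairFreq B {a, d} := by
    unfold pairFreq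
    congr 1
    exact Multiset.filter_congr key
  have hac2 : ({a, c} : Finset (Fin 4)).card = 2 := Finset.card_pair (Ne.symm hca)
  have had2 : ({a, d} : Finset (Fin 4)).card = 2 := Finset.card_pair (Ne.symm hda)
  have := hinj _ _ hac2 had2 hfreq
  have : c ∈ ({a, d} : Finset (Fin 4)) := this ▸ Finset.mem_insert_of_mem (Finset.mem_singleton_self c)
  simp only [Finset.mem_insert, Finset.mem_singleton] at this
  rcases this with h | h
  · exact hca h
  · exact hcd h
end

section
/- There exists an SBGDD_0 of type 2^4: a multiset of 3-element blocks on an 8-point set partitioned into 4 groups of size 2, such that same-group pairs have frequency 0 and the 24 cross-group pairs have frequencies exactly {0, 1, ..., 23}. -/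
/-- A Sarvate-Beam group divisible design SBGDD_μ of type `g^u`:
a multiset `B` of 3-element blocks on a point set `V` with group map `grp`
(each group of size `g`), such that same-group pairs have frequency 0 and the
frequencies of cross-group pairs form a bijection onto
`{μ, μ+1, …, μ + g²·C(u,2) − 1}`. -/
def IsSBGDD {V : Type*} [Fintype V] [DecidableEq V] (g u μ : ℕ)
    (grp : V → Fin u) (B : Multiset (Finset V)) : Prop :=
  (∀ i : Fin u, (Finset.univ.filter (fun x => grp x = i)).card = g) ∧
  (∀ b ∈ B, b.card = 3) ∧
  (∀ x y : V, x ≠ y → grp x = grp y → pairFreq B {x, y} = 0) ∧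
  (∀ x y : V, grp x ≠ grp y →
    pairFreq B {x, y} ∈ Finset.Ico μ (μ + g ^ 2 * u.choose 2)) ∧
  (∀ x y x' y' : V, grp x ≠ grp y → grp x' ≠ grp y' →
    pairFreq B {x, y} = pairFreq B {x', y'} → ({x, y} : Finset V) = {x', y'}) ∧
  (∀ n ∈ Finset.Ico μ (μ + g ^ 2 * u.choose 2),
    ∃ x y : V, grp x ≠ grp y ∧ pairFreq B {x, y} = n)

def myBlocks : Multiset (Finset (Fin 2 × Fin 4)) :=
  ↑(List.flatten [
    List.replicate 1 ({(0,0), (1,1), (0,2)} : Finset (Fin 2 × Fin 4)),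
    List.replicate 1 ({(0,0), (1,1), (1,2)} : Finset (Fin 2 × Fin 4)),
    List.replicate 2 ({(0,0), (1,1), (0,3)} : Finset (Fin 2 × Fin 4)),
    List.replicate 2 ({(0,0), (1,1), (1,3)} : Finset (Fin 2 × Fin 4)),
    List.replicate 3 ({(0,0), (0,2), (0,3)} : Finset (Fin 2 × Fin 4)),
    List.replicate 4 ({(0,0), (0,2), (1,3)} : Finset (Fin 2 × Fin 4)),
    List.replicate 4 ({(0,0), (1,2), (0,3)} : Finset (Fin 2 × Fin 4)),
    List.replicate 5 ({(0,0), (1,2), (1,3)} : Finset (Fin 2 × Fin 4)),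
    List.replicate 1 ({(1,0), (0,1), (1,3)} : Finset (Fin 2 × Fin 4)),
    List.replicate 1 ({(1,0), (1,1), (0,3)} : Finset (Fin 2 × Fin 4)),
    List.replicate 1 ({(1,0), (1,1), (1,3)} : Finset (Fin 2 × Fin 4)),
    List.replicate 1 ({(1,0), (0,2), (0,3)} : Finset (Fin 2 × Fin 4)),
    List.replicate 2 ({(1,0), (0,2), (1,3)} : Finset (Fin 2 × Fin 4)),
    List.replicate 2 ({(1,0), (1,2), (0,3)} : Finset (Fin 2 × Fin 4)),
    List.replicate 3 ({(1,0), (1,2), (1,3)} : Finset (Fin 2 × Fin 4)),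
    List.replicate 6 ({(0,1), (0,2), (0,3)} : Finset (Fin 2 × Fin 4)),
    List.replicate 8 ({(0,1), (0,2), (1,3)} : Finset (Fin 2 × Fin 4)),
    List.replicate 6 ({(0,1), (1,2), (0,3)} : Finset (Fin 2 × Fin 4)),
    List.replicate 7 ({(0,1), (1,2), (1,3)} : Finset (Fin 2 × Fin 4)),
    List.replicate 7 ({(1,1), (0,2), (0,3)} : Finset (Fin 2 × Fin 4)),
    List.replicate 7 ({(1,1), (0,2), (1,3)} : Finset (Fin 2 × Fin 4)),
    List.replicate 10 ({(1,1), (1,2), (0,3)} : Finset (Fin 2 × Fin 4)),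
    List.replicate 8 ({(1,1), (1,2), (1,3)} : Finset (Fin 2 × Fin 4))])

set_option maxRecDepth 10000 in
/-- There exists an SBGDD₀ of type `2⁴`: a multiset of 3-element blocks on an
8-point set partitioned into 4 groups of size 2, with same-group pair
frequencies 0 and cross-group pair frequencies exactly `{0, 1, …, 23}`. -/
theorem sbgdd_type_two_four_exists :
    ∃ B : Multiset (Finset (Fin 2 × Fin 4)), IsSBGDD 2 4 0 Prod.snd B := by
  refine ⟨myBlocks, ?_, ?_, ?_, ?_, ?_, ?_⟩ <;> decide
end

section
/- For μ ≥ 1, there exists an SBTS_μ(4) if and only if one always exists; concretely, for every μ ≥ 1 there is a multiset of 3-element subsets of a 4-set whose six pair frequencies are exactly {μ, μ+1, μ+2, μ+3, μ+4, μ+5}. -/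
lemma card_filter_replicate {α : Type*} (p : α → Prop) [DecidablePred p] (n : ℕ) (a : α) :
    (Multiset.filter p (Multiset.replicate n a)).card = if p a then n else 0 := by
  by_cases h : p a
  · rw [if_pos h, Multiset.filter_eq_self.2, Multiset.card_replicate]
    intro b hb; rw [Multiset.eq_of_mem_replicate hb]; exact h
  · rw [if_neg h, Multiset.filter_eq_nil.2, Multiset.card_zero]
    intro b hb; rw [Multiset.eq_of_mem_replicate hb]; exact h

def mkB (x0 x1 x2 x3 : ℕ) : Multiset (Finset (Fin 4)) :=
  Multiset.replicate x0 {1,2,3} + Multiset.replicate x1 {0,2,3} +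
  Multiset.replicate x2 {0,1,3} + Multiset.replicate x3 {0,1,2}

lemma pairFreq_mkB (x0 x1 x2 x3 : ℕ) (P : Finset (Fin 4)) :
    pairFreq (mkB x0 x1 x2 x3) P =
      (if P ⊆ ({1,2,3} : Finset (Fin 4)) then x0 else 0) +
      (if P ⊆ ({0,2,3} : Finset (Fin 4)) then x1 else 0) +
      (if P ⊆ ({0,1,3} : Finset (Fin 4)) then x2 else 0) +
      (if P ⊆ ({0,1,2} : Finset (Fin 4)) then x3 else 0) := by
  simp only [pairFreq, mkB, Multiset.filter_add, Multiset.card_add,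
    card_filter_replicate]

lemma pairs4 (P : Finset (Fin 4)) (h : P.card = 2) :
    P = {0,1} ∨ P = {0,2} ∨ P = {0,3} ∨ P = {1,2} ∨ P = {1,3} ∨ P = {2,3} := by
  revert h; revert P; decide

lemma key (μ x0 x1 x2 x3 a b : ℕ)
    (h01 : x2 + x3 = μ + 5) (h02 : x1 + x3 = μ + 4) (h03 : x1 + x2 = a)
    (h12 : x0 + x3 = b) (h13 : x0 + x2 = μ + 1) (h23 : x0 + x1 = μ)
    (hab : a = μ + 2 ∧ b = μ + 3 ∨ a = μ + 3 ∧ b = μ + 2) :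
    ∃ B : Multiset (Finset (Fin 4)),
      (∀ c ∈ B, c.card = 3) ∧
      (∀ P : Finset (Fin 4), P.card = 2 →
        pairFreq B P ∈ Finset.Icc μ (μ + 5)) ∧
      (∀ P Q : Finset (Fin 4), P.card = 2 → Q.card = 2 →
        pairFreq B P = pairFreq B Q → P = Q) ∧
      (∀ n ∈ Finset.Icc μ (μ + 5),
        ∃ P : Finset (Fin 4), P.card = 2 ∧ pairFreq B P = n) := by
  have F01 : pairFreq (mkB x0 x1 x2 x3) {0,1} = x2 + x3 := by
    rw [pairFreq_mkB, if_neg (by decide), if_neg (by decide), if_pos (by decide),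
      if_pos (by decide)]; omega
  have F02 : pairFreq (mkB x0 x1 x2 x3) {0,2} = x1 + x3 := by
    rw [pairFreq_mkB, if_neg (by decide), if_pos (by decide), if_neg (by decide),
      if_pos (by decide)]; omega
  have F03 : pairFreq (mkB x0 x1 x2 x3) {0,3} = x1 + x2 := by
    rw [pairFreq_mkB, if_neg (by decide), if_pos (by decide), if_pos (by decide),
      if_neg (by decide)]; omega
  have F12 : pairFreq (mkB x0 x1 x2 x3) {1,2} = x0 + x3 := by
    rw [pairFreq_mkB, if_pos (by decide), if_neg (by decide), if_neg (by decide),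
      if_pos (by decide)]; omega
  have F13 : pairFreq (mkB x0 x1 x2 x3) {1,3} = x0 + x2 := by
    rw [pairFreq_mkB, if_pos (by decide), if_neg (by decide), if_pos (by decide),
      if_neg (by decide)]; omega
  have F23 : pairFreq (mkB x0 x1 x2 x3) {2,3} = x0 + x1 := by
    rw [pairFreq_mkB, if_pos (by decide), if_pos (by decide), if_neg (by decide),
      if_neg (by decide)]; omega
  obtain ⟨rfl, rfl⟩ | ⟨rfl, rfl⟩ := hab
  all_goals {
    refine ⟨mkB x0 x1 x2 x3, ?_, ?_, ?_, ?_⟩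
    · intro c hc
      simp only [mkB, Multiset.mem_add, Multiset.mem_replicate] at hc
      rcases hc with ((⟨-, rfl⟩ | ⟨-, rfl⟩) | ⟨-, rfl⟩) | ⟨-, rfl⟩ <;> decide
    · intro P hP
      rcases pairs4 P hP with rfl | rfl | rfl | rfl | rfl | rfl <;>
        simp only [F01, F02, F03, F12, F13, F23, Finset.mem_Icc] <;> omega
    · intro P Q hP hQ h
      rcases pairs4 P hP with rfl | rfl | rfl | rfl | rfl | rfl <;>
        rcases pairs4 Q hQ with rfl | rfl | rfl | rfl | rfl | rfl <;>
        simp only [F01, F02, F03, F12, F13, F23] at h <;>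
        first | rfl | (exfalso; omega)
    · intro n hn
      rw [Finset.mem_Icc] at hn
      have hc : n = μ ∨ n = μ + 1 ∨ n = μ + 2 ∨ n = μ + 3 ∨ n = μ + 4 ∨ n = μ + 5 := by
        omega
      rcases hc with rfl | rfl | rfl | rfl | rfl | rfl <;>
      first
      | exact ⟨{0,1}, by decide, by rw [F01]; omega⟩
      | exact ⟨{0,2}, by decide, by rw [F02]; omega⟩
      | exact ⟨{0,3}, by decide, by rw [F03]; omega⟩
      | exact ⟨{1,2}, by decide, by rw [F12]; omega⟩
      | exact ⟨{1,3}, by decide, by rw [F13]; omega⟩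
      | exact ⟨{2,3}, by decide, by rw [F23]; omega⟩ }

/-- For every `μ ≥ 1` there exists an SBTS_μ(4): a multiset of 3-element
subsets of a 4-set whose six pair frequencies are exactly
`{μ, μ+1, μ+2, μ+3, μ+4, μ+5}`. -/
theorem sbts_four_exists (μ : ℕ) (hμ : 1 ≤ μ) :
    ∃ B : Multiset (Finset (Fin 4)),
      (∀ b ∈ B, b.card = 3) ∧
      (∀ P : Finset (Fin 4), P.card = 2 →
        pairFreq B P ∈ Finset.Icc μ (μ + 5)) ∧
      (∀ P Q : Finset (Fin 4), P.card = 2 → Q.card = 2 →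
        pairFreq B P = pairFreq B Q → P = Q) ∧
      (∀ n ∈ Finset.Icc μ (μ + 5),
        ∃ P : Finset (Fin 4), P.card = 2 ∧ pairFreq B P = n) := by
  obtain ⟨t, rfl⟩ | ⟨t, rfl⟩ : (∃ t, μ = 2 * t + 1) ∨ (∃ t, μ = 2 * t + 2) := by
    rcases Nat.even_or_odd μ with ⟨t, ht⟩ | ⟨t, ht⟩
    · exact Or.inr ⟨t - 1, by omega⟩
    · exact Or.inl ⟨t, by omega⟩
  · exact key (2 * t + 1) t (t + 1) (t + 2) (t + 4) (2 * t + 3) (2 * t + 4)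
      (by omega) (by omega) (by omega) (by omega) (by omega) (by omega)
      (Or.inl ⟨by omega, by omega⟩)
  · exact key (2 * t + 2) t (t + 2) (t + 3) (t + 4) (2 * t + 5) (2 * t + 4)
      (by omega) (by omega) (by omega) (by omega) (by omega) (by omega)
      (Or.inr ⟨by omega, by omega⟩)
end

section
/- If there exists a {3,4,5}-GDD of type g^u all of whose blocks have size 3, and a Sarvate-Beam cube SBC(m) exists for a given m ≥ 2, then there exists an SBGDD_0 of type (mg)^u. -/
namespace SBI

variable {V : Type*} [DecidableEq V] {m : ℕ}

lemma pairFreq_add (A B : Multiset (Finset V)) (P : Finset V) :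
    pairFreq (A + B) P = pairFreq A P + pairFreq B P := by
  simp [pairFreq, Multiset.filter_add]

lemma pairFreq_nsmul (n : ℕ) (A : Multiset (Finset V)) (P : Finset V) :
    pairFreq (n • A) P = n * pairFreq A P := by
  induction n with
  | zero => simp [pairFreq]
  | succ k ih => rw [succ_nsmul, pairFreq_add, ih]; ring

lemma pairFreq_singleton (t : Finset V) (P : Finset V) :
    pairFreq ({t} : Multiset (Finset V)) P = if P ⊆ t then 1 else 0 := by
  simp [pairFreq, Multiset.filter_singleton]
  split <;> simp

lemma pairFreq_sum {ι : Type*} (s : Finset ι) (F : ι → Multiset (Finset V)) (P : Finset V) :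
    pairFreq (∑ i ∈ s, F i) P = ∑ i ∈ s, pairFreq (F i) P := by
  classical
  induction s using Finset.cons_induction with
  | empty => simp [pairFreq]
  | cons a s ha ih => rw [Finset.sum_cons, Finset.sum_cons, pairFreq_add, ih]

lemma pairFreq_eq_zero {A : Multiset (Finset V)} {P : Finset V}
    (h : ∀ t ∈ A, ¬ P ⊆ t) : pairFreq A P = 0 := by
  simp only [pairFreq, Multiset.card_eq_zero]
  rw [Multiset.filter_eq_nil]
  exact h

def triBlock (x y z : V) (a b c : Fin m) : Finset (V × Fin m) := {(x,a),(y,b),(z,c)}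

variable {x y z : V}

lemma sub0 (hxy : x ≠ y) (hxz : x ≠ z) (hyz : y ≠ z) (i j a b c : Fin m) :
    ({(y,i),(z,j)} : Finset (V × Fin m)) ⊆ triBlock x y z a b c ↔ b = i ∧ c = j := by
  simp [triBlock, Finset.insert_subset_iff, Prod.ext_iff, hxy.symm, hxz.symm, hyz, hyz.symm,
    eq_comm]
  tauto

lemma sub1 (hxy : x ≠ y) (hxz : x ≠ z) (hyz : y ≠ z) (i j a b c : Fin m) :
    ({(x,i),(z,j)} : Finset (V × Fin m)) ⊆ triBlock x y z a b c ↔ a = i ∧ c = j := by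
  simp [triBlock, Finset.insert_subset_iff, Prod.ext_iff, hxy, hxz, hyz, hxz.symm, hyz.symm,
    eq_comm]

lemma sub2 (hxy : x ≠ y) (hxz : x ≠ z) (hyz : y ≠ z) (i j a b c : Fin m) :
    ({(x,i),(y,j)} : Finset (V × Fin m)) ⊆ triBlock x y z a b c ↔ a = i ∧ b = j := by
  simp [triBlock, Finset.insert_subset_iff, Prod.ext_iff, hxy, hxz, hyz, hxy.symm, hyz,
    eq_comm]

lemma card_triBlock (hxy : x ≠ y) (hxz : x ≠ z) (hyz : y ≠ z) (a b c : Fin m) :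
    (triBlock x y z a b c).card = 3 := by
  rw [triBlock, Finset.card_insert_of_notMem, Finset.card_insert_of_notMem] <;>
    simp [Prod.ext_iff, hxy, hxz, hyz]

lemma mem_triBlock_fst {w : V} {i : Fin m} {a b c : Fin m}
    (h : (w,i) ∈ triBlock x y z a b c) : w = x ∨ w = y ∨ w = z := by
  simp [triBlock, Prod.ext_iff] at h
  tauto

def sbcPart (f : Fin m → Fin m → Fin m → ℕ) (x y z : V) : Multiset (Finset (V × Fin m)) :=
  ∑ p : Fin m × Fin m × Fin m, f p.1 p.2.1 p.2.2 • ({triBlock x y z p.1 p.2.1 p.2.2} : Multiset _)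

def latinPart (x y z : V) : Multiset (Finset (V × Fin m)) :=
  ∑ p : Fin m × Fin m, ({triBlock x y z p.1 p.2 (p.1 + p.2)} : Multiset _)

def posPair (x y z : V) (q : Fin 3 × Fin m × Fin m) : Finset (V × Fin m) :=
  if q.1 = 0 then {(y,q.2.1),(z,q.2.2)}
  else if q.1 = 1 then {(x,q.2.1),(z,q.2.2)}
  else {(x,q.2.1),(y,q.2.2)}

lemma mem_sbcPart {f : Fin m → Fin m → Fin m → ℕ} {t : Finset (V × Fin m)}
    (h : t ∈ sbcPart f x y z) : ∃ a b c : Fin m, t = triBlock x y z a b c := by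
  rw [sbcPart, Multiset.mem_sum] at h
  obtain ⟨p, -, hp⟩ := h
  rw [Multiset.mem_nsmul, Multiset.mem_singleton] at hp
  exact ⟨_, _, _, hp.2⟩

lemma mem_latinPart {t : Finset (V × Fin m)}
    (h : t ∈ latinPart x y z) : ∃ a b c : Fin m, t = triBlock x y z a b c := by
  rw [latinPart, Multiset.mem_sum] at h
  obtain ⟨p, -, hp⟩ := h
  rw [Multiset.mem_singleton] at hp
  exact ⟨_, _, _, hp⟩

lemma pairFreq_sbcPart (hxy : x ≠ y) (hxz : x ≠ z) (hyz : y ≠ z)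
    (f : Fin m → Fin m → Fin m → ℕ) (q : Fin 3 × Fin m × Fin m) :
    pairFreq (sbcPart f x y z) (posPair x y z q) = lineSums m f q := by
  obtain ⟨d, i, j⟩ := q
  rw [sbcPart, pairFreq_sum]
  simp only [pairFreq_nsmul, pairFreq_singleton, mul_ite, mul_one, mul_zero]
  fin_cases d <;> simp only [Fin.zero_eta, Fin.mk_one, Fin.reduceFinMk]
  · simp only [posPair, lineSums, reduceIte]
    rw [Fintype.sum_prod_type]
    simp only [Fintype.sum_prod_type]
    simp only [sub0 hxy hxz hyz]
    simp [ite_and, Finset.sum_ite_eq, Finset.sum_ite_eq']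
  · simp only [posPair, lineSums, Fin.isValue, one_ne_zero, reduceIte, Fin.reduceEq,
      if_true, if_false]
    rw [Fintype.sum_prod_type]
    simp only [Fintype.sum_prod_type]
    simp only [sub1 hxy hxz hyz]
    simp [ite_and, Finset.sum_ite_eq, Finset.sum_ite_eq']
  · simp only [posPair, lineSums, Fin.isValue, Fin.reduceEq, reduceIte, if_false]
    rw [Fintype.sum_prod_type]
    simp only [Fintype.sum_prod_type]
    simp only [sub2 hxy hxz hyz]
    simp [ite_and, Finset.sum_ite_eq, Finset.sum_ite_eq']

lemma pairFreq_latinPart [NeZero m] (hxy : x ≠ y) (hxz : x ≠ z) (hyz : y ≠ z)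
    (q : Fin 3 × Fin m × Fin m) :
    pairFreq (latinPart x y z) (posPair x y z q) = 1 := by
  obtain ⟨d, i, j⟩ := q
  rw [latinPart, pairFreq_sum]
  simp only [pairFreq_singleton]
  fin_cases d <;> simp only [Fin.zero_eta, Fin.mk_one, Fin.reduceFinMk]
  · simp only [posPair, reduceIte]
    simp only [sub0 hxy hxz hyz]
    rw [Finset.sum_boole]
    norm_num
    have : Finset.univ.filter (fun p : Fin m × Fin m => p.2 = i ∧ p.1 + p.2 = j)
        = {(j - i, i)} := by
      ext ⟨a, b⟩
      simp only [Finset.mem_filter, Finset.mem_univ, true_and, Finset.mem_singleton,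
        Prod.ext_iff]
      constructor
      · rintro ⟨rfl, h⟩; exact ⟨eq_sub_of_add_eq h, rfl⟩
      · rintro ⟨rfl, rfl⟩; exact ⟨rfl, sub_add_cancel _ _⟩
    rw [this]; rfl
  · simp only [posPair, Fin.mk_one, Fin.isValue, one_ne_zero, reduceIte, Fin.reduceEq,
      if_true, if_false]
    simp only [sub1 hxy hxz hyz]
    rw [Finset.sum_boole]
    norm_num
    have : Finset.univ.filter (fun p : Fin m × Fin m => p.1 = i ∧ p.1 + p.2 = j)
        = {(i, j - i)} := by
      ext ⟨a, b⟩
      simp only [Finset.mem_filter, Finset.mem_univ, true_and, Finset.mem_singleton,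
        Prod.ext_iff]
      constructor
      · rintro ⟨rfl, h⟩; exact ⟨rfl, eq_sub_of_add_eq' h⟩
      · rintro ⟨rfl, rfl⟩; exact ⟨rfl, by rw [add_comm, sub_add_cancel]⟩
    rw [this]; rfl
  · simp only [posPair, Fin.isValue, Fin.reduceEq, reduceIte, if_false]
    simp only [sub2 hxy hxz hyz]
    rw [Finset.sum_boole]
    norm_num
    have : Finset.univ.filter (fun p : Fin m × Fin m => p.1 = i ∧ p.2 = j)
        = {(i, j)} := by
      ext ⟨a, b⟩
      simp [Prod.ext_iff]
    rw [this]; rfl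

lemma finset_pair_eq_pair_iff {α : Type*} [DecidableEq α] {a b c d : α} :
    ({a, b} : Finset α) = {c, d} ↔ a = c ∧ b = d ∨ a = d ∧ b = c := by
  rw [← Finset.coe_inj]
  simp only [Finset.coe_insert, Finset.coe_singleton]
  exact Set.pair_eq_pair_iff

def selA (x y z : V) (d : Fin 3) : V := if d = 0 then y else x
def selB (x y z : V) (d : Fin 3) : V := if d = 2 then y else z

lemma posPair_eq_pair (d : Fin 3) (i j : Fin m) :
    posPair x y z (d, i, j) = {(selA x y z d, i), (selB x y z d, j)} := by
  fin_cases d <;> rfl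

lemma selA_mem (d : Fin 3) : selA x y z d = x ∨ selA x y z d = y ∨ selA x y z d = z := by
  unfold selA; split <;> simp

lemma selB_mem (d : Fin 3) : selB x y z d = x ∨ selB x y z d = y ∨ selB x y z d = z := by
  unfold selB; split <;> simp

lemma posPair_inj (hxy : x ≠ y) (hxz : x ≠ z) (hyz : y ≠ z)
    {q q' : Fin 3 × Fin m × Fin m} (h : posPair x y z q = posPair x y z q') : q = q' := by
  obtain ⟨d, i, j⟩ := q
  obtain ⟨d', i', j'⟩ := q'
  rw [posPair_eq_pair, posPair_eq_pair, finset_pair_eq_pair_iff] at h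
  fin_cases d <;> fin_cases d' <;>
    simp_all [selA, selB, Prod.ext_iff, hxy, hxz, hyz, hxy.symm, hxz.symm, hyz.symm]


lemma posPair0 {V : Type*} [DecidableEq V] {m : ℕ} (x y z : V) (i j : Fin m) :
    posPair x y z ((0 : Fin 3), i, j) = {(y, i), (z, j)} := rfl

lemma posPair1 {V : Type*} [DecidableEq V] {m : ℕ} (x y z : V) (i j : Fin m) :
    posPair x y z ((1 : Fin 3), i, j) = {(x, i), (z, j)} := rfl

lemma posPair2 {V : Type*} [DecidableEq V] {m : ℕ} (x y z : V) (i j : Fin m) :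
    posPair x y z ((2 : Fin 3), i, j) = {(x, i), (y, j)} := rfl

lemma interval_decomp {K a b s t : ℕ} (hs : s < K) (ht : t < K)
    (h : a * K + s = b * K + t) : a = b ∧ s = t := by
  have hab : a = b := by
    by_contra hne
    rcases Nat.lt_or_ge a b with h' | h'
    · have c1 : a * K + s < (a + 1) * K := by
        rw [add_one_mul]; exact Nat.add_lt_add_left hs _
      have c2 : (a + 1) * K ≤ b * K := Nat.mul_le_mul_right K h'
      have c3 := lt_of_lt_of_le (lt_of_lt_of_le c1 c2) (Nat.le_add_right (b * K) t)
      exact absurd h c3.ne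
    · have h'' : b < a := lt_of_le_of_ne h' (Ne.symm hne)
      have c1 : b * K + t < (b + 1) * K := by
        rw [add_one_mul]; exact Nat.add_lt_add_left ht _
      have c2 : (b + 1) * K ≤ a * K := Nat.mul_le_mul_right K h''
      have c3 := lt_of_lt_of_le (lt_of_lt_of_le c1 c2) (Nat.le_add_right (a * K) s)
      exact absurd h.symm c3.ne
  subst hab
  exact ⟨rfl, Nat.add_left_cancel h⟩


lemma two_mul_choose_two (u : ℕ) : 2 * u.choose 2 = u * (u - 1) := by
  rw [Nat.choose_two_right]
  rcases u with _ | n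
  · rfl
  · simp only [Nat.succ_sub_one]
    rw [Nat.mul_comm (n + 1) n]
    exact Nat.mul_div_cancel' (Nat.even_mul_succ_self n).two_dvd

lemma gdd_count {V : Type*} [Fintype V] [DecidableEq V] {g u : ℕ} (grp : V → Fin u)
    (hsize : ∀ i : Fin u, (Finset.univ.filter (fun x => grp x = i)).card = g)
    (D : Finset (Finset V))
    (hblocks : ∀ b ∈ D, b.card = 3)
    (hsame : ∀ x y : V, x ≠ y → grp x = grp y →
      ¬∃ b ∈ D, ({x, y} : Finset V) ⊆ b)
    (hcross : ∀ x y : V, grp x ≠ grp y →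
      ∃! b, b ∈ D ∧ ({x, y} : Finset V) ⊆ b) :
    3 * D.card = g ^ 2 * u.choose 2 := by
  classical
  have hbd : ∀ b ∈ D, ∀ v ∈ b, ∀ w ∈ b, v ≠ w → grp v ≠ grp w := by
    intro b hb v hv w hw hvw h
    exact hsame v w hvw h ⟨b, hb, by
      rw [Finset.insert_subset_iff, Finset.singleton_subset_iff]; exact ⟨hv, hw⟩⟩
  set E : Finset (V × V) := Finset.univ.filter (fun p => grp p.1 = grp p.2) with hEdef
  set T : Finset (V × V) := Finset.univ.filter (fun p => ¬ grp p.1 = grp p.2) with hTdef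
  have hV : Fintype.card V = u * g := by
    rw [← Finset.card_univ,
      Finset.card_eq_sum_card_fiberwise (f := grp) (t := Finset.univ)
        (fun x _ => Finset.mem_univ _)]
    simp [hsize]
  have hET : E.card + T.card = (u * g) * (u * g) := by
    rw [Finset.card_filter_add_card_filter_not]
    simp [Fintype.card_prod, hV]
  have hE : E.card = u * (g * g) := by
    have hrw : E = Finset.univ.biUnion (fun i : Fin u =>
        (Finset.univ.filter (fun x => grp x = i)) ×ˢ (Finset.univ.filter (fun x => grp x = i))) := by
      ext ⟨a, b⟩
      simp only [hEdef, Finset.mem_filter, Finset.mem_univ, true_and, Finset.mem_biUnion,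
        Finset.mem_product]
      exact ⟨fun h => ⟨grp b, h, rfl⟩, fun ⟨i, h1, h2⟩ => h1.trans h2.symm⟩
    rw [hrw, Finset.card_biUnion]
    · simp [Finset.card_product, hsize]
    · intro i _ j _ hij
      rw [Function.onFun, Finset.disjoint_left]
      rintro ⟨a, b⟩ h1 h2
      simp only [Finset.mem_product, Finset.mem_filter, Finset.mem_univ, true_and] at h1 h2
      exact hij (h1.1 ▸ h2.1 ▸ rfl)
  have hTcard : T.card = D.card * 6 := by
    set φ : V × V → Finset V := fun p =>
      if h : grp p.1 ≠ grp p.2 then (hcross p.1 p.2 h).choose else ∅ with hφdef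
    have hφspec : ∀ p : V × V, ∀ h : grp p.1 ≠ grp p.2,
        φ p ∈ D ∧ ({p.1, p.2} : Finset V) ⊆ φ p := by
      intro p h
      simp only [hφdef, dif_pos h]
      exact (hcross p.1 p.2 h).choose_spec.1
    have hφuniq : ∀ p : V × V, ∀ h : grp p.1 ≠ grp p.2, ∀ b ∈ D,
        ({p.1, p.2} : Finset V) ⊆ b → φ p = b := by
      intro p h b hb hsub
      simp only [hφdef, dif_pos h]
      exact ((hcross p.1 p.2 h).choose_spec.2 b ⟨hb, hsub⟩).symm
    have hmem : ∀ p ∈ T, φ p ∈ D := by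
      intro p hp
      rw [hTdef, Finset.mem_filter] at hp
      exact (hφspec p hp.2).1
    rw [Finset.card_eq_sum_card_fiberwise hmem]
    have hfib : ∀ b ∈ D, (T.filter (fun p => φ p = b)).card = 6 := by
      intro b hb
      have hrw : T.filter (fun p => φ p = b) = (b ×ˢ b).filter (fun p => ¬ p.1 = p.2) := by
        ext ⟨v, w⟩
        simp only [Finset.mem_filter, hTdef, Finset.mem_univ, true_and, Finset.mem_product]
        constructor
        · rintro ⟨hg, hφb⟩
          have := (hφspec (v, w) hg).2
          rw [hφb] at this
          rw [Finset.insert_subset_iff, Finset.singleton_subset_iff] at this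
          exact ⟨this, fun h => hg (h ▸ rfl)⟩
        · rintro ⟨⟨hv, hw⟩, hvw⟩
          have hg : grp v ≠ grp w := hbd b hb v hv w hw hvw
          exact ⟨hg, hφuniq (v, w) hg b hb (by
            rw [Finset.insert_subset_iff, Finset.singleton_subset_iff]; exact ⟨hv, hw⟩)⟩
      rw [hrw]
      have hdiag : ((b ×ˢ b).filter (fun p => p.1 = p.2)).card = 3 := by
        have heq : (b ×ˢ b).filter (fun p => p.1 = p.2) = b.image (fun v => (v, v)) := by
          ext ⟨v, w⟩
          simp only [Finset.mem_filter, Finset.mem_product, Finset.mem_image]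
          constructor
          · rintro ⟨⟨hv, -⟩, h⟩; exact ⟨v, hv, by rw [h]⟩
          · rintro ⟨a, ha, h⟩
            simp only [Prod.mk.injEq] at h
            obtain ⟨rfl, rfl⟩ := h
            exact ⟨⟨ha, ha⟩, rfl⟩
        rw [heq, Finset.card_image_of_injective _ (fun a b h => (Prod.ext_iff.mp h).1),
          hblocks b hb]
      have htot := Finset.card_filter_add_card_filter_not
        (s := b ×ˢ b) (p := fun p => p.1 = p.2)
      rw [Finset.card_product, hblocks b hb] at htot
      omega
    rw [Finset.sum_congr rfl hfib, Finset.sum_const, smul_eq_mul]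
  have husq2 : 2 * (u.choose 2 * (g * g)) + u * (g * g) = (u * g) * (u * g) := by
    rw [show 2 * (u.choose 2 * (g * g)) = 2 * u.choose 2 * (g * g) by ring,
      two_mul_choose_two]
    rcases u with _ | n
    · simp
    · simp only [Nat.succ_sub_one]; ring
  rw [show g ^ 2 * u.choose 2 = u.choose 2 * (g * g) by ring]
  omega

end SBI

/-- Inflation by a Sarvate-Beam cube: if there exists a 3-GDD of type `g^u`
(a `{3,4,5}`-GDD all of whose blocks have size 3) and a Sarvate-Beam cube
SBC(m) with `m ≥ 2`, then there exists an SBGDD₀ of type `(mg)^u`. -/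
theorem sbgdd_inflation (g u m : ℕ) (hm : 2 ≤ m) (V : Type*)
    [Fintype V] [DecidableEq V] (grp : V → Fin u)
    (hsize : ∀ i : Fin u, (Finset.univ.filter (fun x => grp x = i)).card = g)
    (D : Finset (Finset V))
    (hblocks : ∀ b ∈ D, b.card = 3)
    (hsame : ∀ x y : V, x ≠ y → grp x = grp y →
      ¬∃ b ∈ D, ({x, y} : Finset V) ⊆ b)
    (hcross : ∀ x y : V, grp x ≠ grp y →
      ∃! b, b ∈ D ∧ ({x, y} : Finset V) ⊆ b)
    (hSBC : ∃ f : Fin m → Fin m → Fin m → ℕ, IsSBC m f) :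
    ∃ B : Multiset (Finset (V × Fin m)),
      IsSBGDD (m * g) u 0 (fun p => grp p.1) B := by
  classical
  obtain ⟨f, hfinj, hflt, hfsurj⟩ := hSBC
  have hmz : NeZero m := ⟨by omega⟩
  set K : ℕ := 3 * m ^ 2 with hKdef
  have hK0 : 0 < K := by positivity
  -- ordered triples for the blocks
  have htriple : ∀ β : {b // b ∈ D}, ∃ x y z : V,
      x ≠ y ∧ x ≠ z ∧ y ≠ z ∧ (β : Finset V) = {x, y, z} := fun β =>
    Finset.card_eq_three.mp (hblocks β.1 β.2)
  choose X Y Z hXY hXZ hYZ hbeq using htriple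
  have memX : ∀ β : {b // b ∈ D}, X β ∈ β.1 := fun β => by rw [hbeq β]; simp
  have memY : ∀ β : {b // b ∈ D}, Y β ∈ β.1 := fun β => by rw [hbeq β]; simp
  have memZ : ∀ β : {b // b ∈ D}, Z β ∈ β.1 := fun β => by rw [hbeq β]; simp
  have gXY : ∀ β : {b // b ∈ D}, grp (X β) ≠ grp (Y β) := fun β h =>
    hsame _ _ (hXY β) h ⟨β.1, β.2, by
      rw [Finset.insert_subset_iff, Finset.singleton_subset_iff]
      exact ⟨memX β, memY β⟩⟩
  have gXZ : ∀ β : {b // b ∈ D}, grp (X β) ≠ grp (Z β) := fun β h =>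
    hsame _ _ (hXZ β) h ⟨β.1, β.2, by
      rw [Finset.insert_subset_iff, Finset.singleton_subset_iff]
      exact ⟨memX β, memZ β⟩⟩
  have gYZ : ∀ β : {b // b ∈ D}, grp (Y β) ≠ grp (Z β) := fun β h =>
    hsame _ _ (hYZ β) h ⟨β.1, β.2, by
      rw [Finset.insert_subset_iff, Finset.singleton_subset_iff]
      exact ⟨memY β, memZ β⟩⟩
  have hgsel : ∀ β : {b // b ∈ D}, ∀ d : Fin 3,
      grp (SBI.selA (X β) (Y β) (Z β) d) ≠ grp (SBI.selB (X β) (Y β) (Z β) d) := by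
    intro β d
    fin_cases d <;>
      simp only [SBI.selA, SBI.selB, Fin.zero_eta, Fin.mk_one, Fin.reduceFinMk,
        Fin.reduceEq, reduceIte, if_true, if_false] <;>
      first | exact gYZ β | exact gXZ β | exact gXY β
  have hmemselA : ∀ β : {b // b ∈ D}, ∀ d : Fin 3, SBI.selA (X β) (Y β) (Z β) d ∈ β.1 := by
    intro β d
    rcases SBI.selA_mem (x := X β) (y := Y β) (z := Z β) d with h | h | h <;> rw [h]
    exacts [memX β, memY β, memZ β]
  have hmemselB : ∀ β : {b // b ∈ D}, ∀ d : Fin 3, SBI.selB (X β) (Y β) (Z β) d ∈ β.1 := by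
    intro β d
    rcases SBI.selB_mem (x := X β) (y := Y β) (z := Z β) d with h | h | h <;> rw [h]
    exacts [memX β, memY β, memZ β]
  -- index the blocks
  let e : {b // b ∈ D} ≃ Fin D.card := Fintype.equivFinOfCardEq (Fintype.card_coe D)
  -- the big multiset
  set B : Multiset (Finset (V × Fin m)) :=
    ∑ β : {b // b ∈ D}, (SBI.sbcPart f (X β) (Y β) (Z β)
      + ((e β : ℕ) * K) • SBI.latinPart (X β) (Y β) (Z β)) with hBdef
  have hmemB : ∀ t ∈ B, ∃ β : {b // b ∈ D}, ∃ a b c : Fin m,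
      t = SBI.triBlock (X β) (Y β) (Z β) a b c := by
    intro t ht
    rw [hBdef, Multiset.mem_sum] at ht
    obtain ⟨β, -, ht⟩ := ht
    rcases Multiset.mem_add.mp ht with h | h
    · obtain ⟨a, b, c, rfl⟩ := SBI.mem_sbcPart h
      exact ⟨β, a, b, c, rfl⟩
    · rw [Multiset.mem_nsmul] at h
      obtain ⟨a, b, c, rfl⟩ := SBI.mem_latinPart h.2
      exact ⟨β, a, b, c, rfl⟩
  -- the key frequency computation
  have hfreq : ∀ β : {b // b ∈ D}, ∀ q : Fin 3 × Fin m × Fin m,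
      pairFreq B (SBI.posPair (X β) (Y β) (Z β) q) = (e β : ℕ) * K + lineSums m f q := by
    intro β q
    rw [hBdef, SBI.pairFreq_sum, Finset.sum_eq_single β]
    · rw [SBI.pairFreq_add, SBI.pairFreq_sbcPart (hXY β) (hXZ β) (hYZ β),
        SBI.pairFreq_nsmul, SBI.pairFreq_latinPart (hXY β) (hXZ β) (hYZ β), mul_one,
        add_comm]
    · intro β' _ hne
      apply SBI.pairFreq_eq_zero
      intro t ht hsub
      have hform : ∃ a b c : Fin m, t = SBI.triBlock (X β') (Y β') (Z β') a b c := by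
        rcases Multiset.mem_add.mp ht with h | h
        · exact SBI.mem_sbcPart h
        · rw [Multiset.mem_nsmul] at h
          exact SBI.mem_latinPart h.2
      obtain ⟨a, b, c, rfl⟩ := hform
      obtain ⟨d, i, j⟩ := q
      rw [SBI.posPair_eq_pair, Finset.insert_subset_iff, Finset.singleton_subset_iff] at hsub
      have h1 := SBI.mem_triBlock_fst hsub.1
      have h2 := SBI.mem_triBlock_fst hsub.2
      have hA' : SBI.selA (X β) (Y β) (Z β) d ∈ β'.1 := by
        rw [hbeq β']
        rcases h1 with h | h | h <;> rw [h] <;> simp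
      have hB' : SBI.selB (X β) (Y β) (Z β) d ∈ β'.1 := by
        rw [hbeq β']
        rcases h2 with h | h | h <;> rw [h] <;> simp
      obtain ⟨bb, -, huniq⟩ := hcross _ _ (hgsel β d)
      have e1 : β.1 = bb := huniq β.1 ⟨β.2, by
        rw [Finset.insert_subset_iff, Finset.singleton_subset_iff]
        exact ⟨hmemselA β d, hmemselB β d⟩⟩
      have e2 : β'.1 = bb := huniq β'.1 ⟨β'.2, by
        rw [Finset.insert_subset_iff, Finset.singleton_subset_iff]
        exact ⟨hA', hB'⟩⟩
      exact hne (Subtype.ext (e2.trans e1.symm))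
    · intro h
      exact absurd (Finset.mem_univ β) h
  -- every cross pair is a position pair of its block
  have hrep : ∀ p0 q0 : V × Fin m, grp p0.1 ≠ grp q0.1 →
      ∃ β : {b // b ∈ D}, ∃ qq : Fin 3 × Fin m × Fin m,
        ({p0, q0} : Finset (V × Fin m)) = SBI.posPair (X β) (Y β) (Z β) qq := by
    rintro ⟨pv, pi⟩ ⟨qv, qi⟩ hg
    simp only at hg
    obtain ⟨b, ⟨hbD, hsub⟩, -⟩ := hcross pv qv hg
    rw [Finset.insert_subset_iff, Finset.singleton_subset_iff] at hsub
    set β : {b // b ∈ D} := ⟨b, hbD⟩ with hβdef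
    have hp : pv ∈ ({X β, Y β, Z β} : Finset V) := by rw [← hbeq β]; exact hsub.1
    have hq : qv ∈ ({X β, Y β, Z β} : Finset V) := by rw [← hbeq β]; exact hsub.2
    simp only [Finset.mem_insert, Finset.mem_singleton] at hp hq
    refine ⟨β, ?_⟩
    rcases hp with rfl | rfl | rfl <;> rcases hq with rfl | rfl | rfl
    · exact absurd rfl hg
    · exact ⟨((2 : Fin 3), pi, qi), (SBI.posPair2 _ _ _ _ _).symm⟩
    · exact ⟨((1 : Fin 3), pi, qi), (SBI.posPair1 _ _ _ _ _).symm⟩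
    · exact ⟨((2 : Fin 3), qi, pi), by rw [SBI.posPair2, Finset.pair_comm]⟩
    · exact absurd rfl hg
    · exact ⟨((0 : Fin 3), pi, qi), (SBI.posPair0 _ _ _ _ _).symm⟩
    · exact ⟨((1 : Fin 3), qi, pi), by rw [SBI.posPair1, Finset.pair_comm]⟩
    · exact ⟨((0 : Fin 3), qi, pi), by rw [SBI.posPair0, Finset.pair_comm]⟩
    · exact absurd rfl hg
  -- the counting identity
  have hcount : D.card * K = (m * g) ^ 2 * u.choose 2 := by
    have h3 := SBI.gdd_count grp hsize D hblocks hsame hcross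
    calc D.card * K = m ^ 2 * (3 * D.card) := by rw [hKdef]; ring
    _ = m ^ 2 * (g ^ 2 * u.choose 2) := by rw [h3]
    _ = (m * g) ^ 2 * u.choose 2 := by ring
  refine ⟨B, ?_, ?_, ?_, ?_, ?_, ?_⟩
  · -- group sizes
    intro i
    have hrw : (Finset.univ.filter (fun p : V × Fin m => grp p.1 = i))
        = (Finset.univ.filter (fun x => grp x = i)) ×ˢ (Finset.univ : Finset (Fin m)) := by
      ext ⟨a, b⟩
      simp
    rw [hrw, Finset.card_product, hsize]
    simp [mul_comm]
  · -- block sizes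
    intro t ht
    obtain ⟨β, a, b, c, rfl⟩ := hmemB t ht
    exact SBI.card_triBlock (hXY β) (hXZ β) (hYZ β) a b c
  · -- same-group pairs
    intro p0 q0 hne hg
    apply SBI.pairFreq_eq_zero
    intro t ht hsub
    obtain ⟨β, a, b, c, rfl⟩ := hmemB t ht
    rw [Finset.insert_subset_iff, Finset.singleton_subset_iff] at hsub
    have h1 : p0 = (X β, a) ∨ p0 = (Y β, b) ∨ p0 = (Z β, c) := by
      have := hsub.1; simp only [SBI.triBlock, Finset.mem_insert, Finset.mem_singleton] at this
      exact this
    have h2 : q0 = (X β, a) ∨ q0 = (Y β, b) ∨ q0 = (Z β, c) := by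
      have := hsub.2; simp only [SBI.triBlock, Finset.mem_insert, Finset.mem_singleton] at this
      exact this
    rcases h1 with rfl | rfl | rfl <;> rcases h2 with rfl | rfl | rfl <;>
      first
        | exact hne rfl
        | exact gXY β hg
        | exact gXZ β hg
        | exact gYZ β hg
        | exact gXY β hg.symm
        | exact gXZ β hg.symm
        | exact gYZ β hg.symm
  · -- frequencies in range
    intro p0 q0 hg
    obtain ⟨β, qq, hPQ⟩ := hrep p0 q0 hg
    rw [hPQ, hfreq β qq, Finset.mem_Ico]
    refine ⟨Nat.zero_le _, ?_⟩
    rw [zero_add, ← hcount]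
    have hb1 : (e β : ℕ) * K + lineSums m f qq < ((e β : ℕ) + 1) * K := by
      rw [add_one_mul]
      exact Nat.add_lt_add_left (hflt qq) _
    have hb2 : ((e β : ℕ) + 1) * K ≤ D.card * K := Nat.mul_le_mul_right K (e β).2
    exact lt_of_lt_of_le hb1 hb2
  · -- injectivity
    intro p0 q0 p0' q0' hg hg' heq
    obtain ⟨β, qq, hPQ⟩ := hrep p0 q0 hg
    obtain ⟨β', qq', hPQ'⟩ := hrep p0' q0' hg'
    rw [hPQ, hPQ', hfreq β qq, hfreq β' qq'] at heq
    obtain ⟨hv, hs⟩ := SBI.interval_decomp (hflt qq) (hflt qq') heq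
    have hββ' : β = β' := e.injective (Fin.val_injective hv)
    have hqq : qq = qq' := hfinj hs
    rw [hPQ, hPQ', hββ', hqq]
  · -- surjectivity
    intro n hn
    rw [Finset.mem_Ico, zero_add, ← hcount] at hn
    have hc : n / K < D.card := (Nat.div_lt_iff_lt_mul hK0).mpr hn.2
    set β : {b // b ∈ D} := e.symm ⟨n / K, hc⟩ with hβdef
    obtain ⟨qq, hq⟩ := hfsurj (n % K) (Nat.mod_lt _ hK0)
    obtain ⟨d, i, j⟩ := qq
    refine ⟨(SBI.selA (X β) (Y β) (Z β) d, i), (SBI.selB (X β) (Y β) (Z β) d, j),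
      hgsel β d, ?_⟩
    rw [← SBI.posPair_eq_pair, hfreq β (d, i, j), hq, hβdef, Equiv.apply_symm_apply]
    show n / K * K + n % K = n
    rw [Nat.mul_comm]
    exact Nat.div_add_mod n K
end

section
/- For positive integers g, μ, u with u ≥ 3: if an SBGDD_μ of type g^u exists with μ ≥ 1, then 3 ∣ g or 3 ∣ μ or u ≡ 0,1 (mod 3). (Necessity direction of the main classification.) -/
lemma sum_pairFreq {V : Type*} [Fintype V] [DecidableEq V] (B : Multiset (Finset V))
    (hB : ∀ b ∈ B, b.card = 3) :
    ∑ P ∈ (Finset.univ : Finset V).powersetCard 2, pairFreq B P = 3 * Multiset.card B := by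
  induction B using Multiset.induction_on with
  | empty => simp [pairFreq]
  | cons a B ih =>
    have ha : a.card = 3 := hB a (Multiset.mem_cons_self a B)
    have hB' : ∀ b ∈ B, b.card = 3 := fun b hb => hB b (Multiset.mem_cons_of_mem hb)
    have step : ∀ P : Finset V, pairFreq (a ::ₘ B) P = (if P ⊆ a then 1 else 0) + pairFreq B P := by
      intro P
      simp only [pairFreq, Multiset.filter_cons]
      split <;> simp [Nat.add_comm]
    simp only [step, Finset.sum_add_distrib, ih hB']
    have : ∑ P ∈ (Finset.univ : Finset V).powersetCard 2, (if P ⊆ a then 1 else 0) =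
        ((Finset.univ : Finset V).powersetCard 2 |>.filter (fun P => P ⊆ a)).card := by
      rw [Finset.card_filter]
    rw [this]
    have heq : ((Finset.univ : Finset V).powersetCard 2 |>.filter (fun P => P ⊆ a)) =
        a.powersetCard 2 := by
      ext P
      simp [Finset.mem_powersetCard, and_comm]
    rw [heq, Finset.card_powersetCard, ha]
    simp [Multiset.card_cons, Nat.mul_succ, Nat.mul_add]
    ring

/-- Necessity direction of the main classification: for positive `g, μ` and
`u ≥ 3`, if an SBGDD_μ of type `g^u` exists then `3 ∣ g` or `3 ∣ μ` or
`u ≡ 0,1 (mod 3)`. -/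
theorem sbgdd_necessity (g u μ : ℕ) (hg : 1 ≤ g) (hμ : 1 ≤ μ) (hu : 3 ≤ u)
    (V : Type*) [Fintype V] [DecidableEq V] (grp : V → Fin u)
    (B : Multiset (Finset V)) (h : IsSBGDD g u μ grp B) :
    3 ∣ g ∨ 3 ∣ μ ∨ u % 3 = 0 ∨ u % 3 = 1 := by
  classical
  by_cases hg3 : 3 ∣ g
  · exact Or.inl hg3
  by_cases hu3 : u % 3 = 0 ∨ u % 3 = 1
  · exact Or.inr (Or.inr hu3)
  right; left
  have hu2 : u % 3 = 2 := by omega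
  obtain ⟨h1, h2, h3, h4, h5, h6⟩ := h
  set N := g ^ 2 * u.choose 2 with hN
  -- cross pairs
  set cross : Finset (Finset V) :=
    ((Finset.univ : Finset V).powersetCard 2).filter
      (fun P => ∃ x ∈ P, ∃ y ∈ P, grp x ≠ grp y) with hcross
  -- every 2-set is either cross or has freq 0
  have hzero : ∀ P ∈ (Finset.univ : Finset V).powersetCard 2, P ∉ cross → pairFreq B P = 0 := by
    intro P hP hPc
    rw [Finset.mem_powersetCard] at hP
    obtain ⟨x, y, hxy, rfl⟩ := Finset.card_eq_two.mp hP.2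
    have : grp x = grp y := by
      by_contra hne
      exact hPc (Finset.mem_filter.mpr ⟨Finset.mem_powersetCard.mpr hP,
        x, by simp, y, by simp, hne⟩)
    exact h3 x y hxy this
  have hsub : cross ⊆ (Finset.univ : Finset V).powersetCard 2 := Finset.filter_subset _ _
  have hsum1 : ∑ P ∈ (Finset.univ : Finset V).powersetCard 2, pairFreq B P
      = ∑ P ∈ cross, pairFreq B P :=
    (Finset.sum_subset hsub (fun P hP hPc => hzero P hP hPc)).symm
  -- helper to decompose a cross pair
  have hdec : ∀ P ∈ cross, ∃ x y : V, grp x ≠ grp y ∧ P = {x, y} := by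
    intro P hP
    rw [hcross, Finset.mem_filter, Finset.mem_powersetCard] at hP
    obtain ⟨⟨-, hcard⟩, x, hx, y, hy, hne⟩ := hP
    refine ⟨x, y, hne, ?_⟩
    have hxy : x ≠ y := fun e => hne (e ▸ rfl)
    refine (Finset.eq_of_subset_of_card_le ?_ ?_).symm
    · intro z hz
      rcases Finset.mem_insert.mp hz with rfl | hz
      · exact hx
      · exact (Finset.mem_singleton.mp hz) ▸ hy
    · rw [hcard, Finset.card_insert_of_notMem (by simpa using hxy), Finset.card_singleton]
  -- bijection with Ico
  have hsum2 : ∑ P ∈ cross, pairFreq B P = ∑ n ∈ Finset.Ico μ (μ + N), n := by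
    refine Finset.sum_bij (fun P _ => pairFreq B P) ?_ ?_ ?_ (fun _ _ => rfl)
    · intro P hP
      obtain ⟨x, y, hne, rfl⟩ := hdec P hP
      exact h4 x y hne
    · intro P hP Q hQ hfeq
      obtain ⟨x, y, hne, rfl⟩ := hdec P hP
      obtain ⟨x', y', hne', rfl⟩ := hdec Q hQ
      exact h5 x y x' y' hne hne' hfeq
    · intro n hn
      obtain ⟨x, y, hne, hfreq⟩ := h6 n hn
      have hxy : x ≠ y := fun e => hne (e ▸ rfl)
      refine ⟨{x, y}, Finset.mem_filter.mpr ⟨Finset.mem_powersetCard.mpr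
        ⟨Finset.subset_univ _, Finset.card_eq_two.mpr ⟨x, y, fun e => hne (e ▸ rfl), rfl⟩⟩,
        x, by simp, y, by simp, hne⟩, hfreq⟩
  -- total sum is divisible by 3
  have hdvd : 3 ∣ ∑ n ∈ Finset.Ico μ (μ + N), n := by
    rw [← hsum2, ← hsum1, sum_pairFreq B h2]
    exact Dvd.intro _ rfl
  -- compute the sum
  have hGauss : 2 * ∑ n ∈ Finset.Ico μ (μ + N), n = 2 * N * μ + N * (N - 1) := by
    rw [Finset.sum_Ico_eq_sum_range]
    simp only [Nat.add_sub_cancel_left]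
    rw [Finset.sum_add_distrib, Finset.sum_const, Finset.card_range, smul_eq_mul,
      Nat.mul_add, mul_comm 2 (∑ x ∈ Finset.range N, x), Finset.sum_range_id_mul_two]
    ring
  -- N % 3 = 1
  have hgsq : g ^ 2 % 3 = 1 := by
    have : g % 3 = 1 ∨ g % 3 = 2 := by omega
    rw [pow_two, Nat.mul_mod]
    rcases this with h | h <;> rw [h]
  have hchoose : u.choose 2 % 3 = 1 := by
    have h2c : 2 * u.choose 2 = u * (u - 1) := by
      rw [Nat.choose_two_right, Nat.mul_div_cancel' (Nat.even_mul_pred_self u).two_dvd]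
    have : (u * (u - 1)) % 3 = 2 := by
      rw [Nat.mul_mod, hu2]
      have : (u - 1) % 3 = 1 := by omega
      rw [this]
    omega
  have hN3 : N % 3 = 1 := by
    rw [hN, Nat.mul_mod, hgsq, hchoose]
  obtain ⟨a, ha⟩ : ∃ a, N = 3 * a + 1 := ⟨N / 3, by omega⟩
  set S := ∑ n ∈ Finset.Ico μ (μ + N), n with hS
  obtain ⟨t, ht⟩ : ∃ t, 2 * S = 3 * t + 2 * μ :=
    ⟨2 * a * μ + 3 * a * a + a, by rw [hGauss, ha, Nat.add_sub_cancel]; ring⟩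
  obtain ⟨s, hs⟩ := hdvd
  omega
end
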